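/- Let T_n be the sequence of polynomials defined by T_0(x) = x and T_n(x) = (1 - x²)·T_{n-1}'(x) for n ≥ 1. Then for every n ≥ 1, B_{2n} = (1/2^{2n}) · Σ_{j=0}^{n} k_j/(2j+1), where k_j is the coefficient of x^{2j} in the polynomial T_{2n-1}(x); that is, the 2n-th Bernoulli number equals 2^{-2n} times a sum of fractions whose denominators are the consecutive odd numbers 1, 3, 5, …, 2n+1 and whose numerators are the (integer) coefficients of T_{2n-1}. -/

import Mathlib

open Polynomial

noncomputable def T : ℕ → Polynomial ℚ
  | 0 => Polynomial.X
  | n + 1 => (1 - Polynomial.X ^ 2) * Polynomial.derivative (T n)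

namespace BT

open PowerSeries

noncomputable def E : ℚ⟦X⟧ := rescale 2 (exp ℚ)

lemma coeff_E (n : ℕ) : PowerSeries.coeff (R := ℚ) n E = 2 ^ n / n.factorial := by
  simp [E, coeff_rescale, coeff_exp, algebraMap]
  ring

lemma constE : PowerSeries.constantCoeff (R := ℚ) E = 1 := by
  have := coeff_E 0
  simpa using this

lemma E1ne : (E + 1 : ℚ⟦X⟧) ≠ 0 := by
  intro h
  have : PowerSeries.constantCoeff (R := ℚ) (E + 1) = 0 := by rw [h]; simp
  rw [map_add, constE] at this
  norm_num at this

lemma derivE : d⁄dX ℚ E = 2 * E := by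
  ext n
  rw [PowerSeries.coeff_derivative, ← map_ofNat (PowerSeries.C (R := ℚ)) 2, PowerSeries.coeff_C_mul,
    coeff_E, coeff_E, Nat.factorial_succ]
  have hn : (n.factorial : ℚ) ≠ 0 := Nat.cast_ne_zero.mpr n.factorial_ne_zero
  push_cast
  field_simp
  ring

noncomputable def y : ℚ⟦X⟧ := (E - 1) * (E + 1)⁻¹

lemma hy : y * (E + 1) = E - 1 := by
  have h : PowerSeries.constantCoeff (R := ℚ) (E + 1) ≠ 0 := by rw [map_add, constE]; norm_num
  rw [y, mul_assoc, PowerSeries.inv_mul_cancel _ h, mul_one]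

lemma const_y : PowerSeries.constantCoeff (R := ℚ) y = 0 := by
  have := congrArg (PowerSeries.constantCoeff (R := ℚ)) hy
  simp only [map_mul, map_add, map_sub, constE, map_one] at this
  linarith

lemma cancelE1 {f g : ℚ⟦X⟧} (h : f * (E + 1) = g * (E + 1)) : f = g :=
  mul_right_cancel₀ E1ne h

lemma deriv_y : d⁄dX ℚ y = 1 - y ^ 2 := by
  have hd := congrArg (d⁄dX ℚ) hy
  rw [Derivation.leibniz] at hd
  simp only [smul_eq_mul, map_add, derivE, map_sub, Derivation.map_one_eq_zero] at hd
  apply cancelE1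
  linear_combination hd + (y - 1) * hy
lemma rescale_neg_E : rescale (-1 : ℚ) E = rescale (-2 : ℚ) (exp ℚ) := by
  rw [E, rescale_rescale]
  norm_num

lemma EmulEneg : E * rescale (-1 : ℚ) E = 1 := by
  rw [rescale_neg_E, E, exp_mul_exp_eq_exp_add]
  norm_num [rescale_zero]

lemma rneg_y : rescale (-1 : ℚ) y = -y := by
  have h := congrArg (rescale (-1 : ℚ)) hy
  simp only [map_mul, map_add, map_sub, map_one] at h
  have hEE : rescale (-1 : ℚ) E * E = 1 := by rw [mul_comm]; exact EmulEneg
  apply cancelE1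
  have h2 : rescale (-1:ℚ) y * ((rescale (-1:ℚ) E + 1) * E)
      = (rescale (-1:ℚ) E - 1) * E := by rw [← mul_assoc, h]
  rw [add_mul, sub_mul, hEE, one_mul] at h2
  linear_combination h2 + hy

lemma coeff_ypow_parity {j n : ℕ} (hodd : Odd (n + j)) : PowerSeries.coeff (R := ℚ) n (y ^ j) = 0 := by
  have h2 : rescale (-1:ℚ) (y ^ j) = ((-1:ℚ) • y) ^ j := by
    rw [map_pow, rneg_y, neg_one_smul]
  have h3 := congrArg (PowerSeries.coeff (R := ℚ) n) h2
  rw [coeff_rescale, _root_.smul_pow, map_smul, smul_eq_mul] at h3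
  rcases Nat.even_or_odd n with he | ho
  · have hj : Odd j := by
      rcases Nat.even_or_odd j with h' | h'
      · exact absurd (he.add h') (by simpa using hodd)
      · exact h'
    rw [he.neg_one_pow, hj.neg_one_pow] at h3
    linarith
  · have hj : Even j := by
      rcases Nat.even_or_odd j with h' | h'
      · exact h'
      · exact absurd (ho.add_odd h') (by simpa using hodd)
    rw [ho.neg_one_pow, hj.neg_one_pow] at h3
    linarith

lemma coeff_ypow_lt {j n : ℕ} (h : n < j) : PowerSeries.coeff (R := ℚ) n (y ^ j) = 0 := by
  obtain ⟨w, hw⟩ : (PowerSeries.X : ℚ⟦X⟧) ∣ y := PowerSeries.X_dvd_iff.mpr const_y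
  have hyj : y ^ j = PowerSeries.X ^ j * w ^ j := by rw [hw, mul_pow]
  rw [hyj, PowerSeries.coeff_X_pow_mul', if_neg (by omega)]

noncomputable def g : ℕ → ℚ⟦X⟧
  | 0 => y
  | k + 1 => (-1:ℚ)^k • (y ^ k - y ^ (k + 2))

lemma deriv_ypow (j : ℕ) : d⁄dX ℚ (y ^ (j + 1)) = ((j:ℚ) + 1) • (y ^ j * (1 - y ^ 2)) := by
  induction j with
  | zero => simp [deriv_y]
  | succ j ih =>
    have h : y ^ (j + 2) = y * y ^ (j + 1) := by ring
    rw [h, Derivation.leibniz, ih, deriv_y]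
    push_cast
    simp only [PowerSeries.smul_eq_C_mul, smul_eq_mul, map_add, map_one, one_mul]
    ring

lemma S1 : d⁄dX ℚ (g 1) = (2:ℚ) • g 2 := by
  show d⁄dX ℚ ((-1:ℚ)^0 • (y ^ 0 - y ^ 2)) = (2:ℚ) • ((-1:ℚ)^1 • (y ^ 1 - y ^ 3))
  rw [Derivation.map_smul, map_sub, show (y^2 : ℚ⟦X⟧) = y^(1+1) by norm_num,
    deriv_ypow 1]
  simp only [pow_zero, Derivation.map_one_eq_zero, PowerSeries.smul_eq_C_mul, smul_eq_mul,
    map_add, map_one, map_neg, map_pow, map_ofNat, one_mul]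
  norm_num
  ring

lemma S2 (k : ℕ) : d⁄dX ℚ (g (k + 2)) =
    ((k:ℚ) + 3) • g (k + 3) - ((k:ℚ) + 1) • g (k + 1) := by
  show d⁄dX ℚ ((-1:ℚ)^(k+1) • (y ^ (k+1) - y ^ (k + 3)))
      = ((k:ℚ) + 3) • ((-1:ℚ)^(k+2) • (y ^ (k+2) - y ^ (k + 4)))
        - ((k:ℚ) + 1) • ((-1:ℚ)^k • (y ^ k - y ^ (k + 2)))
  rw [Derivation.map_smul, map_sub, deriv_ypow k, show k + 3 = (k + 2) + 1 from rfl,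
    deriv_ypow (k + 2)]
  push_cast
  simp only [PowerSeries.smul_eq_C_mul, smul_eq_mul, map_add, map_one, map_neg, map_pow,
    map_ofNat, one_mul]
  ring

lemma g1eq : g 1 = 1 - y ^ 2 := by simp [g]

lemma S0 : d⁄dX ℚ (g 0) = g 1 := by rw [g1eq]; exact deriv_y

lemma coeff_step (m : ℕ) (f h : ℚ⟦X⟧) (hd : d⁄dX ℚ f = h) :
    PowerSeries.coeff (R := ℚ) (m+1) f * (m+1) = PowerSeries.coeff (R := ℚ) m h := by
  rw [← hd, PowerSeries.coeff_derivative]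

lemma Tsucc_coeff (m k : ℕ) :
    (T (m+1)).coeff k
      = (T m).coeff (k+1) * (k+1)
        - (if 2 ≤ k then (T m).coeff (k-2+1) * ((k-2+1 : ℕ) : ℚ) else 0) := by
  show ((1 - Polynomial.X ^ 2) * derivative (T m)).coeff k = _
  rw [sub_mul, one_mul, Polynomial.coeff_sub, Polynomial.X_pow_mul,
    Polynomial.coeff_mul_X_pow', Polynomial.coeff_derivative]
  congr 1
  split_ifs with h
  · rw [Polynomial.coeff_derivative]
    push_cast
    ring
  · rfl

theorem MAIN (m : ℕ) : ∀ k, (T m).coeff k = (m.factorial : ℚ) * PowerSeries.coeff (R := ℚ) m (g k) := by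
  induction m with
  | zero =>
    intro k
    have h0 : (T 0) = Polynomial.X := rfl
    rw [h0]
    match k with
    | 0 => simp [g, PowerSeries.coeff_zero_eq_constantCoeff, const_y]
    | 1 => simp [g1eq, PowerSeries.coeff_zero_eq_constantCoeff, map_pow, const_y]
    | (k+2) =>
      simp [g, PowerSeries.coeff_zero_eq_constantCoeff, map_pow, const_y,
        Polynomial.coeff_X]
  | succ m ih =>
    intro k
    rw [Tsucc_coeff]
    have hfac : ((m+1).factorial : ℚ) = (m.factorial : ℚ) * (m+1) := by
      rw [Nat.factorial_succ]; push_cast; ring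
    match k with
    | 0 =>
      rw [if_neg (by omega), ih 1, hfac]
      have hc := coeff_step m (g 0) (g 1) S0
      push_cast
      linear_combination -(m.factorial : ℚ) * hc
    | 1 =>
      rw [if_neg (by omega), ih 2, hfac]
      have hc := coeff_step m (g 1) ((2:ℚ) • g 2) S1
      rw [map_smul, smul_eq_mul] at hc
      push_cast
      linear_combination -(m.factorial : ℚ) * hc
    | (k+2) =>
      rw [if_pos (by omega)]
      simp only [Nat.add_sub_cancel]
      rw [ih (k+3), ih (k+1), hfac]
      have hc := coeff_step m (g (k+2)) _ (S2 k)
      rw [map_sub, map_smul, map_smul, smul_eq_mul, smul_eq_mul] at hc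
      push_cast
      linear_combination -(m.factorial : ℚ) * hc

noncomputable def P : ℚ⟦X⟧ :=
  PowerSeries.mk fun n => ∑ i ∈ Finset.range (n+1), ((2*i+1 : ℚ))⁻¹ * PowerSeries.coeff (R := ℚ) n (y ^ (2*i+1))

noncomputable def R : ℚ⟦X⟧ :=
  PowerSeries.mk fun n => ∑ i ∈ Finset.range (n+1), ((2*i+3 : ℚ))⁻¹ * PowerSeries.coeff (R := ℚ) n (y ^ (2*i+1))

noncomputable def Pfin (M : ℕ) : ℚ⟦X⟧ :=
  ∑ i ∈ Finset.range M, ((2*i+1 : ℚ))⁻¹ • y ^ (2*i+1)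

noncomputable def Rfin (M : ℕ) : ℚ⟦X⟧ :=
  ∑ i ∈ Finset.range M, ((2*i+3 : ℚ))⁻¹ • y ^ (2*i+1)

lemma cast_ne' (i : ℕ) : ((2*i+1 : ℚ)) ≠ 0 := by positivity

lemma coeff_Pfin (n M : ℕ) (h : n + 1 ≤ M) : PowerSeries.coeff (R := ℚ) n (Pfin M) = PowerSeries.coeff (R := ℚ) n P := by
  rw [P, coeff_mk, Pfin, map_sum]
  rw [← Finset.sum_subset (Finset.range_subset_range.mpr h)]
  · apply Finset.sum_congr rfl
    intro i _
    rw [map_smul, smul_eq_mul]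
  · intro i _ hi
    rw [Finset.mem_range, not_lt] at hi
    rw [map_smul, smul_eq_mul, coeff_ypow_lt (by omega), mul_zero]

lemma coeff_Rfin (n M : ℕ) (h : n + 1 ≤ M) : PowerSeries.coeff (R := ℚ) n (Rfin M) = PowerSeries.coeff (R := ℚ) n R := by
  rw [R, coeff_mk, Rfin, map_sum]
  rw [← Finset.sum_subset (Finset.range_subset_range.mpr h)]
  · apply Finset.sum_congr rfl
    intro i _
    rw [map_smul, smul_eq_mul]
  · intro i _ hi
    rw [Finset.mem_range, not_lt] at hi
    rw [map_smul, smul_eq_mul, coeff_ypow_lt (by omega), mul_zero]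

lemma DPfin (M : ℕ) : d⁄dX ℚ (Pfin M) = 1 - y ^ (2*M) := by
  rw [Pfin, map_sum]
  have h : ∀ i ∈ Finset.range M,
      d⁄dX ℚ (((2*i+1 : ℚ))⁻¹ • y ^ (2*i+1)) = y ^ (2*i) - y ^ (2*(i+1)) := by
    intro i _
    rw [Derivation.map_smul, deriv_ypow (2*i), smul_smul]
    push_cast
    rw [inv_mul_cancel₀ (by positivity), one_smul]
    ring
  rw [Finset.sum_congr rfl h, Finset.sum_range_sub']
  simp

lemma P_eq_X : P = PowerSeries.X := by
  ext n
  cases n with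
  | zero => simp [P, coeff_mk, const_y, PowerSeries.coeff_zero_eq_constantCoeff]
  | succ n =>
    have h1 : PowerSeries.coeff (R := ℚ) (n+1) P = PowerSeries.coeff (R := ℚ) (n+1) (Pfin (n+2)) := (coeff_Pfin (n+1) (n+2) (by omega)).symm
    have h2 := coeff_step n (Pfin (n+2)) _ (DPfin (n+2))
    rw [map_sub, PowerSeries.coeff_one, coeff_ypow_lt (by omega), sub_zero] at h2
    rw [h1, PowerSeries.coeff_X]
    have hne : ((n:ℚ) + 1) ≠ 0 := by positivity
    rcases Nat.eq_zero_or_pos n with rfl | hn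
    · simp at h2 ⊢
      linarith
    · rw [if_neg (by omega : ¬ n = 0)] at h2
      rw [if_neg (by omega : ¬ (n+1) = 1)]
      rcases mul_eq_zero.mp h2 with h | h
      · exact h
      · exact absurd h hne

lemma coeff_mul_congr {f g : ℚ⟦X⟧} (h : ℚ⟦X⟧) (N : ℕ)
    (hfg : ∀ a, a ≤ N → PowerSeries.coeff (R := ℚ) a f = PowerSeries.coeff (R := ℚ) a g) :
    PowerSeries.coeff (R := ℚ) N (f * h) = PowerSeries.coeff (R := ℚ) N (g * h) := by
  rw [PowerSeries.coeff_mul, PowerSeries.coeff_mul]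
  apply Finset.sum_congr rfl
  intro p hp
  rw [Finset.HasAntidiagonal.mem_antidiagonal] at hp
  rw [hfg p.1 (by omega)]

lemma Rfin_mul (M : ℕ) : Rfin M * y ^ 2 = Pfin (M+1) - y := by
  rw [Pfin, Finset.sum_range_succ', Rfin, Finset.sum_mul]
  have h1 : ∀ i ∈ Finset.range M,
      (((2*i+3 : ℚ))⁻¹ • y ^ (2*i+1)) * y ^ 2
        = ((2*(i+1)+1 : ℚ))⁻¹ • y ^ (2*(i+1)+1) := by
    intro i _
    rw [smul_mul_assoc, ← pow_add]
    ring_nf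
  rw [Finset.sum_congr rfl h1]
  norm_num

lemma R_mul : R * y ^ 2 = P - y := by
  ext N
  have h1 : PowerSeries.coeff (R := ℚ) N (R * y^2) = PowerSeries.coeff (R := ℚ) N (Rfin (N+1) * y^2) :=
    (coeff_mul_congr _ N (fun a ha => coeff_Rfin a (N+1) (by omega))).symm
  rw [h1, Rfin_mul, map_sub, map_sub, coeff_Pfin _ _ (by omega)]

noncomputable def Godd : ℚ⟦X⟧ :=
  PowerSeries.mk fun m =>
    if Odd m then (m.factorial : ℚ)⁻¹ * ∑ k ∈ Finset.range (m+2), ((k:ℚ)+1)⁻¹ * (T m).coeff k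
    else 0

noncomputable def Gfin (M : ℕ) : ℚ⟦X⟧ := ∑ k ∈ Finset.range M, ((k:ℚ)+1)⁻¹ • g k

lemma heven_van {m j : ℕ} (hm : Odd m) (hj : Even j) : PowerSeries.coeff (R := ℚ) m (y^j) = 0 :=
  coeff_ypow_parity (hm.add_even hj)

lemma sign_lemma {m : ℕ} (k : ℕ) (hm : Odd m) :
    ((-1:ℚ))^k * (PowerSeries.coeff (R := ℚ) m (y^k) - PowerSeries.coeff (R := ℚ) m (y^(k+2)))
      = PowerSeries.coeff (R := ℚ) m (y^(k+2)) - PowerSeries.coeff (R := ℚ) m (y^k) := by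
  rcases Nat.even_or_odd k with he | ho
  · rw [heven_van hm he, heven_van hm (he.add even_two)]
    ring
  · rw [ho.neg_one_pow]
    ring

lemma odd_reindex (m : ℕ) (hm : Odd m) (F : ℕ → ℚ) (A : ℕ) (hA : m + 1 ≤ A) :
    ∑ j ∈ Finset.range A, F j * PowerSeries.coeff (R := ℚ) m (y^j)
      = ∑ i ∈ Finset.range (m+1), F (2*i+1) * PowerSeries.coeff (R := ℚ) m (y^(2*i+1)) := by
  have pad1 : ∑ j ∈ Finset.range (2*A), F j * PowerSeries.coeff (R := ℚ) m (y^j)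
      = ∑ j ∈ Finset.range A, F j * PowerSeries.coeff (R := ℚ) m (y^j) := by
    symm
    apply Finset.sum_subset (Finset.range_subset_range.mpr (by omega))
    intro j _ hj
    rw [Finset.mem_range, not_lt] at hj
    rw [coeff_ypow_lt (by omega), mul_zero]
  have fold : ∀ B, ∑ j ∈ Finset.range (2*B), F j * PowerSeries.coeff (R := ℚ) m (y^j)
      = ∑ i ∈ Finset.range B, F (2*i+1) * PowerSeries.coeff (R := ℚ) m (y^(2*i+1)) := by
    intro B
    induction B with
    | zero => simp
    | succ B ih =>
      rw [show 2*(B+1) = 2*B+1+1 by ring, Finset.sum_range_succ, Finset.sum_range_succ, ih,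
        Finset.sum_range_succ, heven_van hm ⟨B, by ring⟩, mul_zero, add_zero]
  have pad2 : ∑ i ∈ Finset.range A, F (2*i+1) * PowerSeries.coeff (R := ℚ) m (y^(2*i+1))
      = ∑ i ∈ Finset.range (m+1), F (2*i+1) * PowerSeries.coeff (R := ℚ) m (y^(2*i+1)) := by
    symm
    apply Finset.sum_subset (Finset.range_subset_range.mpr (by omega))
    intro i _ hi
    rw [Finset.mem_range, not_lt] at hi
    rw [coeff_ypow_lt (by omega), mul_zero]
  rw [← pad1, fold A, pad2]

lemma sumA (m : ℕ) :
    ∑ j ∈ Finset.range (m+3), (j:ℚ)⁻¹ * PowerSeries.coeff (R := ℚ) m (y^j)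
      = PowerSeries.coeff (R := ℚ) m y + ∑ k ∈ Finset.range (m+1), ((k:ℚ)+2)⁻¹ * PowerSeries.coeff (R := ℚ) m (y^(k+2)) := by
  rw [Finset.sum_range_succ', Finset.sum_range_succ']
  norm_num
  rw [add_comm]
  congr 1
  apply Finset.sum_congr rfl
  intro k _
  ring_nf

lemma Godd_eq : Godd = P - R := by
  ext m
  rw [Godd, coeff_mk, map_sub, P, R, coeff_mk, coeff_mk]
  by_cases hm : Odd m
  · rw [if_pos hm]
    have hMAIN : ∀ k, (T m).coeff k = (m.factorial : ℚ) * PowerSeries.coeff (R := ℚ) m (g k) := MAIN m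
    have hfac : (m.factorial : ℚ) ≠ 0 := Nat.cast_ne_zero.mpr m.factorial_ne_zero
    have step1 : (m.factorial : ℚ)⁻¹ * ∑ k ∈ Finset.range (m+2), ((k:ℚ)+1)⁻¹ * (T m).coeff k
        = ∑ k ∈ Finset.range (m+2), ((k:ℚ)+1)⁻¹ * PowerSeries.coeff (R := ℚ) m (g k) := by
      rw [Finset.mul_sum]
      apply Finset.sum_congr rfl
      intro k _
      rw [hMAIN k]
      field_simp
    rw [step1]
    have step2 : ∑ k ∈ Finset.range (m+2), ((k:ℚ)+1)⁻¹ * PowerSeries.coeff (R := ℚ) m (g k)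
        = PowerSeries.coeff (R := ℚ) m y + (∑ k ∈ Finset.range (m+1), ((k:ℚ)+2)⁻¹ * PowerSeries.coeff (R := ℚ) m (y^(k+2))
            - ∑ k ∈ Finset.range (m+1), ((k:ℚ)+2)⁻¹ * PowerSeries.coeff (R := ℚ) m (y^k)) := by
      rw [Finset.sum_range_succ', add_comm (PowerSeries.coeff (R := ℚ) m y)]
      congr 1
      · rw [← Finset.sum_sub_distrib]
        apply Finset.sum_congr rfl
        intro k _
        have hg : PowerSeries.coeff (R := ℚ) m (g (k+1)) = ((-1:ℚ))^k * (PowerSeries.coeff (R := ℚ) m (y^k) - PowerSeries.coeff (R := ℚ) m (y^(k+2))) := by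
          show PowerSeries.coeff (R := ℚ) m ((-1:ℚ)^k • (y^k - y^(k+2))) = _
          rw [map_smul, map_sub, smul_eq_mul]
        rw [hg, sign_lemma k hm]
        push_cast
        ring_nf
      · simp [g]
    rw [step2]
    have hP : ∑ i ∈ Finset.range (m+1), ((2*i+1 : ℚ))⁻¹ * PowerSeries.coeff (R := ℚ) m (y ^ (2*i+1))
        = ∑ j ∈ Finset.range (m+3), (j:ℚ)⁻¹ * PowerSeries.coeff (R := ℚ) m (y^j) := by
      rw [odd_reindex m hm (fun j => (j:ℚ)⁻¹) (m+3) (by omega)]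
      apply Finset.sum_congr rfl
      intro i _
      push_cast
      ring_nf
    have hR : ∑ i ∈ Finset.range (m+1), ((2*i+3 : ℚ))⁻¹ * PowerSeries.coeff (R := ℚ) m (y ^ (2*i+1))
        = ∑ j ∈ Finset.range (m+1), ((j:ℚ)+2)⁻¹ * PowerSeries.coeff (R := ℚ) m (y^j) := by
      rw [odd_reindex m hm (fun j => ((j:ℚ)+2)⁻¹) (m+1) (by omega)]
      apply Finset.sum_congr rfl
      intro i _
      push_cast
      ring_nf
    rw [hP, hR, sumA]
    ring
  · rw [if_neg hm]
    have he : Even m := Nat.not_odd_iff_even.mp hm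
    have h1 : ∀ i ∈ Finset.range (m+1), ((2*i+1 : ℚ))⁻¹ * PowerSeries.coeff (R := ℚ) m (y ^ (2*i+1)) = 0 := by
      intro i _
      rw [coeff_ypow_parity (he.add_odd ⟨i, by ring⟩), mul_zero]
    have h2 : ∀ i ∈ Finset.range (m+1), ((2*i+3 : ℚ))⁻¹ * PowerSeries.coeff (R := ℚ) m (y ^ (2*i+1)) = 0 := by
      intro i _
      rw [coeff_ypow_parity (he.add_odd ⟨i, by ring⟩), mul_zero]
    rw [Finset.sum_eq_zero h1, Finset.sum_eq_zero h2]
    ring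

lemma Godd_id :
    Godd * (E - 1)^2 =
      PowerSeries.X * (E-1)^2 - PowerSeries.X * (E+1)^2 + (E-1)*(E+1) := by
  have h1 : Godd * y^2 = PowerSeries.X * y^2 - PowerSeries.X + y := by
    rw [Godd_eq, sub_mul, R_mul, P_eq_X]
    ring
  have hsq : y^2 * (E+1)^2 = (E-1)^2 := by rw [← mul_pow, hy]
  calc Godd * (E-1)^2 = (Godd * y^2) * (E+1)^2 := by rw [← hsq]; ring
    _ = (PowerSeries.X * y^2 - PowerSeries.X + y) * (E+1)^2 := by rw [h1]
    _ = PowerSeries.X * (y^2*(E+1)^2) - PowerSeries.X*(E+1)^2 + (y*(E+1))*(E+1) := by ring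
    _ = _ := by rw [hsq, hy]

noncomputable def Cber : ℚ⟦X⟧ := rescale 2 (bernoulliPowerSeries ℚ)

lemma rescale_X (a : ℚ) :
    rescale a (PowerSeries.X : ℚ⟦X⟧) = PowerSeries.C (R := ℚ) a * PowerSeries.X := by
  ext n
  rw [coeff_rescale, PowerSeries.coeff_C_mul, PowerSeries.coeff_X]
  split_ifs with h
  · subst h; simp
  · simp

lemma hC : Cber * (E - 1) = PowerSeries.C (R := ℚ) 2 * PowerSeries.X := by
  have h := congrArg (rescale (2:ℚ)) (bernoulliPowerSeries_mul_exp_sub_one ℚ)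
  rw [map_mul, map_sub, map_one, rescale_X] at h
  exact h

lemma deriv_two : d⁄dX ℚ (PowerSeries.C (R := ℚ) 2 * PowerSeries.X) = PowerSeries.C (R := ℚ) 2 := by
  rw [Derivation.leibniz, smul_eq_mul, smul_eq_mul, PowerSeries.derivative_X,
    PowerSeries.derivative_C]
  ring

lemma derivC : d⁄dX ℚ Cber * (E - 1) + Cber * (2*E) = PowerSeries.C (R := ℚ) 2 := by
  have h := congrArg (d⁄dX ℚ) hC
  rw [Derivation.leibniz, smul_eq_mul, smul_eq_mul, deriv_two, map_sub, derivE,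
    Derivation.map_one_eq_zero] at h
  linear_combination h

lemma Bid : (d⁄dX ℚ Cber + 1) * (E - 1)^2 =
    PowerSeries.X * (E-1)^2 - PowerSeries.X * (E+1)^2 + (E-1)*(E+1) := by
  have h1 := derivC
  have h2 := hC
  have hX : PowerSeries.C (R := ℚ) 2 * PowerSeries.X = 2 * PowerSeries.X := by
    rw [← map_ofNat (PowerSeries.C (R := ℚ)) 2]
  rw [hX] at h2
  have h3 : (PowerSeries.C (R := ℚ) 2 : ℚ⟦X⟧) = 2 := by rw [← map_ofNat (PowerSeries.C (R := ℚ)) 2]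
  rw [h3] at h1
  linear_combination (E - 1) * h1 - 2 * E * h2

lemma Em1ne : (E - 1 : ℚ⟦X⟧) ≠ 0 := by
  intro h
  have h1 : PowerSeries.coeff (R := ℚ) 1 (E - 1) = 0 := by rw [h]; simp
  rw [map_sub, coeff_E, PowerSeries.coeff_one] at h1
  norm_num at h1

lemma final_eq : Godd = d⁄dX ℚ Cber + 1 :=
  mul_right_cancel₀ (pow_ne_zero 2 Em1ne) (Godd_id.trans Bid.symm)

lemma coeff_Cber (n : ℕ) : PowerSeries.coeff (R := ℚ) n Cber = 2^n * (_root_.bernoulli n / n.factorial) := by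
  rw [Cber, coeff_rescale, bernoulliPowerSeries, coeff_mk]
  simp [algebraMap]

lemma even_fold (f : ℕ → ℚ) (hvan : ∀ k, Odd k → f k = 0) (n : ℕ) :
    ∑ k ∈ Finset.range (2*n+1), f k = ∑ j ∈ Finset.range (n+1), f (2*j) := by
  induction n with
  | zero => simp
  | succ n ih =>
    rw [show 2*(n+1)+1 = (2*n+1)+1+1 by ring, Finset.sum_range_succ, Finset.sum_range_succ, ih,
      Finset.sum_range_succ (f := fun j => f (2*j)) (n := n+1), hvan (2*n+1) ⟨n, by ring⟩,
      show 2*n+1+1 = 2*(n+1) by ring]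
    ring

lemma T_vanish (m k : ℕ) (hm : Odd m) (hk : Odd k) : (T m).coeff k = 0 := by
  obtain ⟨t, rfl⟩ := hk
  have he : Even (2*t) := ⟨t, by ring⟩
  rw [MAIN]
  have hg0 : PowerSeries.coeff (R := ℚ) m (g (2*t+1)) = 0 := by
    show PowerSeries.coeff (R := ℚ) m ((-1:ℚ)^(2*t) • (y^(2*t) - y^(2*t+2))) = 0
    rw [map_smul, map_sub, heven_van hm he, heven_van hm (he.add even_two)]
    simp
  rw [hg0, mul_zero]

end BT

theorem bernoulli_as_sum_of_fractions (n : ℕ) (hn : 1 ≤ n) :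
    _root_.bernoulli (2 * n) =
      (1 / 2 ^ (2 * n)) *
        ∑ j ∈ Finset.range (n + 1), (T (2 * n - 1)).coeff (2 * j) / (2 * (j : ℚ) + 1) := by
  obtain ⟨m, hm2⟩ : ∃ m, 2*n = m+1 := ⟨2*n-1, by omega⟩
  have hm1 : 2*n - 1 = m := by omega
  have hodd : Odd m := ⟨n-1, by omega⟩
  have h := congrArg (PowerSeries.coeff (R := ℚ) m) BT.final_eq
  rw [BT.Godd, PowerSeries.coeff_mk, if_pos hodd, map_add, PowerSeries.coeff_derivative,
    BT.coeff_Cber, PowerSeries.coeff_one, if_neg (by omega)] at h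
  rw [show m+2 = 2*n+1 by omega] at h
  rw [BT.even_fold _ (fun k hk => by rw [BT.T_vanish _ k hodd hk, mul_zero]) n] at h
  have hsum : ∑ j ∈ Finset.range (n + 1), (((2*j : ℕ):ℚ)+1)⁻¹ * (T m).coeff (2*j)
      = ∑ j ∈ Finset.range (n + 1), (T m).coeff (2 * j) / (2 * (j : ℚ) + 1) := by
    apply Finset.sum_congr rfl
    intro j _
    push_cast
    ring
  rw [hsum] at h
  have hfac : (m.factorial : ℚ) ≠ 0 := Nat.cast_ne_zero.mpr (Nat.factorial_ne_zero _)
  have hfacm : (((m+1).factorial : ℕ) : ℚ) = ((m:ℚ)+1) * m.factorial := by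
    rw [Nat.factorial_succ]
    push_cast
    ring
  rw [hfacm] at h
  have hm1ne : ((m:ℚ)+1) ≠ 0 := by positivity
  rw [hm1, hm2]
  field_simp at h
  have hS : (∑ j ∈ Finset.range (n + 1), (T m).coeff (2 * j) / (2 * (j:ℚ) + 1))
      = 2^(m+1) * _root_.bernoulli (m+1) := by
    apply mul_right_cancel₀ hm1ne
    apply mul_right_cancel₀ hfac
    linear_combination ((m:ℚ)+1) * (m.factorial:ℚ) * h
  rw [hS]
  field_simp
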